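/- Let C1 be a q-ary 1-perfect code of length n = (q^m−1)/(q−1), m ≥ 2, let R_i be the principal i-component of the q-ary Hamming code H_{q,m+1} of length qn+1 with i ≤ (q−1)n + 1, and for each c ∈ C1 let σ_c be a permutation of F_q. Then C = ∪_{c ∈ C1} σ_c(R_i + (0 | c)) is a q-ary 1-perfect code of length qn + 1, where 0 ∈ F_q^{(q−1)n+1} and σ_c acts on coordinate i. -/

import Mathlib

variable {F : Type*} [Field F] [Fintype F] [DecidableEq F] {m n : ℕ}

/-- The linear code with parity-check columns `h`. -/
def parityCheckCode (h : Fin n → Fin m → F) : Submodule F (Fin n → F) where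
  carrier := {x | ∑ j, x j • h j = 0}
  add_mem' := by
    intro a b ha hb
    simp only [Set.mem_setOf_eq, Pi.add_apply, add_smul, Finset.sum_add_distrib] at *
    simp [ha, hb]
  zero_mem' := by simp
  smul_mem' := by
    intro c a ha
    simp only [Set.mem_setOf_eq, Pi.smul_apply, smul_eq_mul, mul_smul] at *
    rw [← Finset.smul_sum, ha, smul_zero]

/-- The submodule of vectors supported inside the coordinate set `l`. -/
def supportedIn (l : Set (Fin n)) : Submodule F (Fin n → F) where
  carrier := {u | ∀ j ∉ l, u j = 0}
  add_mem' := by intro a b ha hb j hj; simp [ha j hj, hb j hj]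
  zero_mem' := by intro j hj; simp
  smul_mem' := by intro c a ha j hj; simp [ha j hj]

/-- The principal `i`-component `R_i`: span of all triples (codewords of
weight 3) with a `1` in coordinate `i`. -/
def principalComponent (h : Fin n → Fin m → F) (i : Fin n) : Submodule F (Fin n → F) :=
  Submodule.span F {u | u ∈ parityCheckCode h ∧ hammingNorm u = 3 ∧ u i = 1}

/-- The line of `PG_{m−1}(q)` through the points `a` and `b`, viewed as a set
of coordinates: `k` is on the line iff `h_k` is in the span of `h_a, h_b`. -/
def lineThrough (h : Fin n → Fin m → F) (a b : Fin n) : Set (Fin n) :=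
  {k | h k ∈ Submodule.span F {h a, h b}}


/-- `C` is a 1-perfect code over the alphabet `F` with coordinate set `ι`. -/
def IsOnePerfectCode {ι : Type*} [Fintype ι] (C : Set (ι → F)) : Prop :=
  (∀ x ∈ C, ∀ y ∈ C, x ≠ y → 3 ≤ hammingDist x y) ∧
  Nat.card C * (1 + Fintype.card ι * (Fintype.card F - 1)) =
    Fintype.card F ^ Fintype.card ι

/-- Apply the permutation `σ` of the alphabet to the `i`-th coordinate. -/
def applyAt {N : ℕ} (i : Fin N) (σ : Equiv.Perm F) (x : Fin N → F) : Fin N → F :=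
  Function.update x i (σ (x i))

lemma aux_card_eq_range_mul_ker {A B : Type*} [AddGroup A] [AddGroup B] (f : A →+ B) :
    Nat.card A = Nat.card f.range * Nat.card f.ker := by
  rw [Nat.card_congr (AddSubgroup.addGroupEquivQuotientProdAddSubgroup (s := f.ker)), Nat.card_prod,
    Nat.card_congr (QuotientAddGroup.quotientKerEquivRange f).toEquiv]

set_option maxHeartbeats 2000000 in
/-- the generalized Lindström–Schönheim construction.  Let `C1`
be a `q`-ary 1-perfect code of length `n = (q^m−1)/(q−1)`, let `R_i` be the
principal `i`-component of the Hamming code `H_{q,m+1}` of length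
`qn + 1 = ((q−1)n + 1) + n`, with `i ≤ (q−1)n + 1` (i.e. `i` among the first
`(q−1)n + 1` coordinates) and the last `n` coordinates forming a hyperplane of
`PG_m(q)` (necessarily avoiding `i`), and for each `c ∈ C1` let `σ_c` be a
permutation of `F_q`.  Then `C = ∪_{c ∈ C1} σ_c(R_i + (0 | c))` is a `q`-ary
1-perfect code of length `qn + 1`. -/
theorem generalized_lindstrom_schonheim
    (hq : Fintype.card F ≥ 2) (hm : 2 ≤ m)
    (hn : n = (Fintype.card F ^ m - 1) / (Fintype.card F - 1))
    (h : Fin (((Fintype.card F - 1) * n + 1) + n) → Fin (m + 1) → F)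
    (hnz : ∀ j, h j ≠ 0)
    (hnp : ∀ j k, j ≠ k → ∀ c : F, h j ≠ c • h k)
    (hcover : ∀ z : Fin (m + 1) → F, z ≠ 0 → ∃ j, ∃ c : F, z = c • h j)
    (φ : (Fin (m + 1) → F) →ₗ[F] F) (hφ : φ ≠ 0)
    (hhyp : ∀ j, φ (h j) = 0 ↔ ∃ j' : Fin n, j = Fin.natAdd ((Fintype.card F - 1) * n + 1) j')
    (i : Fin ((Fintype.card F - 1) * n + 1))
    (C1 : Set (Fin n → F)) (hC1 : IsOnePerfectCode C1)
    (σ : (Fin n → F) → Equiv.Perm F) :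
    IsOnePerfectCode
      (⋃ c ∈ C1,
        applyAt (Fin.castAdd n i) (σ c) ''
          {w | ∃ r ∈ principalComponent h (Fin.castAdd n i),
                w = r + Fin.append (0 : Fin ((Fintype.card F - 1) * n + 1) → F) c}) := by
  classical
  have hq0 : 0 < Fintype.card F := by omega
  have hqm1 : 1 ≤ Fintype.card F ^ m := Nat.one_le_pow _ _ hq0
  have hdvd : (Fintype.card F - 1) ∣ Fintype.card F ^ m - 1 := by
    simpa using Nat.sub_dvd_pow_sub_pow (Fintype.card F) 1 m
  have hqm : (Fintype.card F - 1) * n = Fintype.card F ^ m - 1 := by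
    rw [hn, Nat.mul_div_cancel' hdvd]
  have hn1 : 0 < n := by
    rcases Nat.eq_zero_or_pos n with h0 | h1
    · exfalso
      have h2 : Fintype.card F ^ 2 ≤ Fintype.card F ^ m := Nat.pow_le_pow_right (by omega) hm
      have h4 : 4 ≤ Fintype.card F ^ 2 := by nlinarith
      rw [h0, mul_zero] at hqm
      omega
    · exact h1
  have hqm' : n * (Fintype.card F - 1) = Fintype.card F ^ m - 1 := by rw [mul_comm]; exact hqm
  have hsmall : 1 + n * (Fintype.card F - 1) = Fintype.card F ^ m := by omega
  have hbig : 1 + ((Fintype.card F - 1) * n + 1 + n) * (Fintype.card F - 1)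
      = Fintype.card F ^ (m + 1) := by
    obtain ⟨p, hp⟩ : ∃ p, Fintype.card F = p + 1 := ⟨Fintype.card F - 1, by omega⟩
    have hp' : Fintype.card F - 1 = p := by omega
    have h1 : Fintype.card F ^ (m + 1) = Fintype.card F * Fintype.card F ^ m := by ring
    have h2 : Fintype.card F ^ m = n * (Fintype.card F - 1) + 1 := by omega
    rw [h1, h2, hp', hp]; ring
  -- Fin facts
  have hnatne : ∀ k : Fin n, Fin.natAdd ((Fintype.card F - 1) * n + 1) k ≠ Fin.castAdd n i := by
    intro k hk
    have := congrArg Fin.val hk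
    simp only [Fin.coe_natAdd, Fin.coe_castAdd] at this
    omega
  have hcastnat : ∀ (j : Fin ((Fintype.card F - 1) * n + 1)) (k : Fin n),
      Fin.castAdd n j ≠ Fin.natAdd ((Fintype.card F - 1) * n + 1) k := by
    intro j k hk
    have := congrArg Fin.val hk
    simp only [Fin.coe_natAdd, Fin.coe_castAdd] at this
    omega
  have hφi : φ (h (Fin.castAdd n i)) ≠ 0 := by
    intro h0
    obtain ⟨k, hk⟩ := (hhyp _).1 h0
    exact hnatne k hk.symm
  have hφnat : ∀ k : Fin n, φ (h (Fin.natAdd ((Fintype.card F - 1) * n + 1) k)) = 0 :=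
    fun k => (hhyp _).2 ⟨k, rfl⟩
  have hprop_eq : ∀ (j k : Fin (((Fintype.card F - 1) * n + 1) + n)) (c : F),
      h j = c • h k → j = k := by
    intro j k c hc
    by_contra hne
    exact hnp j k hne c hc
  have hindep : ∀ (j k : Fin (((Fintype.card F - 1) * n + 1) + n)), j ≠ k →
      ∀ s t : F, s • h j + t • h k = 0 → s = 0 ∧ t = 0 := by
    intro j k hjk s t hst
    have hs : s = 0 := by
      by_contra hs0
      have h1 : s • h j = -(t • h k) := eq_neg_of_add_eq_zero_left hst
      have h2 : h j = (-(s⁻¹ * t)) • h k := by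
        have h3 := congrArg (fun z => s⁻¹ • z) h1
        simpa [smul_smul, inv_mul_cancel₀ hs0, smul_neg, neg_smul] using h3
      exact hnp j k hjk _ h2
    refine ⟨hs, ?_⟩
    rw [hs, zero_smul, zero_add] at hst
    rcases smul_eq_zero.mp hst with h1 | h2
    · exact h1
    · exact absurd h2 (hnz k)
  -- line decomposition
  have hline : ∀ j : Fin (((Fintype.card F - 1) * n + 1) + n), ∃ (k : Fin n) (a b : F),
      j ≠ Fin.castAdd n i → (b ≠ 0 ∧
        h j = a • h (Fin.castAdd n i) + b • h (Fin.natAdd ((Fintype.card F - 1) * n + 1) k)) := by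
    intro j
    by_cases hji : j = Fin.castAdd n i
    · exact ⟨⟨0, hn1⟩, 0, 0, fun hc => absurd hji hc⟩
    · set z : Fin (m + 1) → F := φ (h (Fin.castAdd n i)) • h j - φ (h j) • h (Fin.castAdd n i)
        with hzdef
      have hz0 : z ≠ 0 := by
        intro h0
        have h1 : φ (h (Fin.castAdd n i)) • h j = φ (h j) • h (Fin.castAdd n i) :=
          sub_eq_zero.mp h0
        have h2 : h j = ((φ (h (Fin.castAdd n i)))⁻¹ * φ (h j)) • h (Fin.castAdd n i) := by
          have h3 := congrArg (fun w => (φ (h (Fin.castAdd n i)))⁻¹ • w) h1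
          simpa [smul_smul, inv_mul_cancel₀ hφi] using h3
        exact hji (hprop_eq _ _ _ h2)
      obtain ⟨k0, c, hc⟩ := hcover z hz0
      have hφz : φ z = 0 := by
        rw [hzdef]; simp [map_sub, map_smul, smul_eq_mul]; ring
      have hc0 : c ≠ 0 := by rintro rfl; simp at hc; exact hz0 hc
      have hφk0 : φ (h k0) = 0 := by
        have : c * φ (h k0) = 0 := by rw [← smul_eq_mul, ← map_smul, ← hc]; exact hφz
        rcases mul_eq_zero.mp this with h1 | h2
        · exact absurd h1 hc0
        · exact h2
      obtain ⟨k, hk⟩ := (hhyp k0).1 hφk0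
      refine ⟨k, (φ (h (Fin.castAdd n i)))⁻¹ * φ (h j), (φ (h (Fin.castAdd n i)))⁻¹ * c, fun _ => ⟨?_, ?_⟩⟩
      · exact mul_ne_zero (inv_ne_zero hφi) hc0
      · rw [← hk]
        have h1 : φ (h (Fin.castAdd n i)) • h j = φ (h j) • h (Fin.castAdd n i) + c • h k0 := by
          rw [← hc, hzdef]; abel
        have h2 := congrArg (fun w => (φ (h (Fin.castAdd n i)))⁻¹ • w) h1
        simpa [smul_smul, inv_mul_cancel₀ hφi, smul_add] using h2
  choose ℓf αf βf hspec using hline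
  -- basic consequences
  have hβ : ∀ j, j ≠ Fin.castAdd n i → βf j ≠ 0 := fun j hj => (hspec j hj).1
  have hdec : ∀ j, j ≠ Fin.castAdd n i → h j = αf j • h (Fin.castAdd n i)
      + βf j • h (Fin.natAdd ((Fintype.card F - 1) * n + 1) (ℓf j)) :=
    fun j hj => (hspec j hj).2
  have hα : ∀ j (hj : j ≠ Fin.castAdd n i), φ (h j) = αf j * φ (h (Fin.castAdd n i)) := by
    intro j hj
    have := congrArg φ (hdec j hj)
    simpa [map_add, map_smul, smul_eq_mul, hφnat] using this
  have hℓself : ∀ k : Fin n, ℓf (Fin.natAdd ((Fintype.card F - 1) * n + 1) k) = k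
      ∧ βf (Fin.natAdd ((Fintype.card F - 1) * n + 1) k) = 1 := by
    intro k
    have hne : Fin.natAdd ((Fintype.card F - 1) * n + 1) k ≠ Fin.castAdd n i := hnatne k
    have hα0 : αf (Fin.natAdd ((Fintype.card F - 1) * n + 1) k) = 0 := by
      have h1 := hα _ hne
      rw [hφnat k] at h1
      rcases mul_eq_zero.mp h1.symm with h2 | h3
      · exact h2
      · exact absurd h3 hφi
    have h2 := hdec _ hne
    rw [hα0, zero_smul, zero_add] at h2
    have h3 := hprop_eq _ _ _ h2
    have hk : ℓf (Fin.natAdd ((Fintype.card F - 1) * n + 1) k) = k := by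
      have := congrArg Fin.val h3
      simp only [Fin.coe_natAdd] at this
      exact Fin.ext (by omega)
    refine ⟨hk, ?_⟩
    rw [hk] at h2
    have h4 : (βf (Fin.natAdd ((Fintype.card F - 1) * n + 1) k) - 1)
        • h (Fin.natAdd ((Fintype.card F - 1) * n + 1) k) = 0 := by
      rw [sub_smul, one_smul, sub_eq_zero]; exact h2.symm
    rcases smul_eq_zero.mp h4 with h5 | h6
    · exact sub_eq_zero.mp h5
    · exact absurd h6 (hnz _)
  -- the folding matrix and map
  set B : Fin n → Fin (((Fintype.card F - 1) * n + 1) + n) → F :=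
    fun k j => if j = Fin.castAdd n i then 0 else if ℓf j = k then βf j else 0 with hBdef
  set π : (Fin (((Fintype.card F - 1) * n + 1) + n) → F) →ₗ[F] (Fin n → F) :=
    Matrix.mulVecLin (Matrix.of B) with hπdef
  have hπapp : ∀ x k, π x k = ∑ j, B k j * x j := by
    intro x k
    simp [hπdef, Matrix.mulVecLin_apply, Matrix.mulVec, dotProduct]
  have hBi : ∀ k, B k (Fin.castAdd n i) = 0 := by intro k; simp [hBdef]
  have hBnat : ∀ (k k' : Fin n),
      B k (Fin.natAdd ((Fintype.card F - 1) * n + 1) k') = if k' = k then 1 else 0 := by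
    intro k k'
    rw [hBdef]
    simp only [if_neg (hnatne k'), (hℓself k').1, (hℓself k').2]
  -- L1 : π ignores coordinate i'
  have hπupd : ∀ x v, π (Function.update x (Fin.castAdd n i) v) = π x := by
    intro x v
    funext k
    rw [hπapp, hπapp]
    refine Finset.sum_congr rfl (fun j _ => ?_)
    by_cases hj : j = Fin.castAdd n i
    · subst hj; rw [hBi]; ring
    · rw [Function.update_of_ne hj]
  -- L2 : π (0 | c) = c
  have hπappend : ∀ c : Fin n → F,
      π (Fin.append (0 : Fin ((Fintype.card F - 1) * n + 1) → F) c) = c := by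
    intro c
    funext k
    rw [hπapp, Fin.sum_univ_add]
    have h1 : ∀ j : Fin ((Fintype.card F - 1) * n + 1),
        B k (Fin.castAdd n j) * Fin.append (0 : Fin ((Fintype.card F - 1) * n + 1) → F) c
          (Fin.castAdd n j) = 0 := by
      intro j; rw [Fin.append_left]; simp
    have h2 : ∀ j : Fin n,
        B k (Fin.natAdd ((Fintype.card F - 1) * n + 1) j)
          * Fin.append (0 : Fin ((Fintype.card F - 1) * n + 1) → F) c
            (Fin.natAdd ((Fintype.card F - 1) * n + 1) j)
          = if j = k then c j else 0 := by
      intro j; rw [Fin.append_right, hBnat]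
      split <;> ring
    rw [Finset.sum_congr rfl (fun j _ => h1 j), Finset.sum_congr rfl (fun j _ => h2 j)]
    simp [Finset.sum_ite_eq']
  have hmemP : ∀ x : Fin (((Fintype.card F - 1) * n + 1) + n) → F,
      x ∈ parityCheckCode h ↔ ∑ j, x j • h j = 0 := fun x => Iff.rfl
  -- minimum weight of the Hamming code
  have hminw : ∀ u, u ∈ parityCheckCode h → u ≠ 0 → 3 ≤ hammingNorm u := by
    intro u hu hu0
    by_contra hlt
    push_neg at hlt
    have hsum : ∑ j ∈ Finset.univ.filter (fun j => u j ≠ 0), u j • h j = 0 := by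
      have he : ∑ j ∈ Finset.univ.filter (fun j => u j ≠ 0), u j • h j = ∑ j, u j • h j :=
        Finset.sum_filter_of_ne (fun x _ hfx => fun h0 => hfx (by rw [h0, zero_smul]))
      rw [he]
      exact (hmemP u).mp hu
    have hcard : (Finset.univ.filter (fun j => u j ≠ 0)).card ≤ 2 := by
      have : hammingNorm u ≤ 2 := by omega
      exact this
    interval_cases hc : (Finset.univ.filter (fun j => u j ≠ 0)).card
    · apply hu0
      funext j
      by_contra h0
      have : j ∈ Finset.univ.filter (fun j => u j ≠ 0) := Finset.mem_filter.mpr ⟨Finset.mem_univ _, h0⟩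
      rw [Finset.card_eq_zero.mp hc] at this
      exact absurd this (Finset.notMem_empty j)
    · obtain ⟨a, ha⟩ := Finset.card_eq_one.mp hc
      have hamem : a ∈ Finset.univ.filter (fun j => u j ≠ 0) := by
        rw [ha]; exact Finset.mem_singleton_self a
      have hua : u a ≠ 0 := (Finset.mem_filter.mp hamem).2
      rw [ha, Finset.sum_singleton] at hsum
      rcases smul_eq_zero.mp hsum with h1 | h2
      · exact hua h1
      · exact hnz a h2
    · obtain ⟨a, b, hab, hs⟩ := Finset.card_eq_two.mp hc
      have hamem : a ∈ Finset.univ.filter (fun j => u j ≠ 0) := by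
        rw [hs]; simp
      have hua : u a ≠ 0 := (Finset.mem_filter.mp hamem).2
      rw [hs, Finset.sum_pair hab] at hsum
      exact hua (hindep a b hab _ _ hsum).1
  -- π vanishes on the generators of the principal component
  have hnatinj : ∀ k k' : Fin n, Fin.natAdd ((Fintype.card F - 1) * n + 1) k
      = Fin.natAdd ((Fintype.card F - 1) * n + 1) k' → k = k' := by
    intro k k' he
    have := congrArg Fin.val he
    simp only [Fin.coe_natAdd] at this
    exact Fin.ext (by omega)
  have hπgen : ∀ u, u ∈ parityCheckCode h → hammingNorm u = 3 →
      u (Fin.castAdd n i) = 1 → π u = 0 := by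
    intro u hu h3 hui
    have his : Fin.castAdd n i ∈ Finset.univ.filter (fun j => u j ≠ 0) := by
      refine Finset.mem_filter.mpr ⟨Finset.mem_univ _, ?_⟩
      rw [hui]; exact one_ne_zero
    have hce : ((Finset.univ.filter (fun j => u j ≠ 0)).erase (Fin.castAdd n i)).card = 2 := by
      rw [Finset.card_erase_of_mem his]
      have : (Finset.univ.filter (fun j => u j ≠ 0)).card = 3 := h3
      omega
    obtain ⟨a, b, hab, hab2⟩ := Finset.card_eq_two.mp hce
    have ha_mem : a ∈ (Finset.univ.filter (fun j => u j ≠ 0)).erase (Fin.castAdd n i) := by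
      rw [hab2]; simp
    have hb_mem : b ∈ (Finset.univ.filter (fun j => u j ≠ 0)).erase (Fin.castAdd n i) := by
      rw [hab2]; simp
    have hai : a ≠ Fin.castAdd n i := (Finset.mem_erase.mp ha_mem).1
    have hbi : b ≠ Fin.castAdd n i := (Finset.mem_erase.mp hb_mem).1
    have hua : u a ≠ 0 := (Finset.mem_filter.mp (Finset.mem_erase.mp ha_mem).2).2
    have hub : u b ≠ 0 := (Finset.mem_filter.mp (Finset.mem_erase.mp hb_mem).2).2
    have hs_eq : Finset.univ.filter (fun j => u j ≠ 0) = insert (Fin.castAdd n i) {a, b} := by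
      rw [← hab2, Finset.insert_erase his]
    have hu0 : ∀ j, j ∉ (insert (Fin.castAdd n i) ({a, b} : Finset _)) → u j = 0 := by
      intro j hj
      by_contra h0
      exact hj (hs_eq ▸ Finset.mem_filter.mpr ⟨Finset.mem_univ j, h0⟩)
    have hinotmem : Fin.castAdd n i ∉ ({a, b} : Finset _) := by
      simp [Ne.symm hai, Ne.symm hbi]
    have hsum : h (Fin.castAdd n i) + (u a • h a + u b • h b) = 0 := by
      have h1 : ∑ j ∈ insert (Fin.castAdd n i) ({a, b} : Finset _), u j • h j
          = ∑ j, u j • h j :=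
        Finset.sum_subset (Finset.subset_univ _) (fun x _ hx => by rw [hu0 x hx, zero_smul])
      rw [Finset.sum_insert hinotmem, Finset.sum_pair hab, hui, one_smul] at h1
      rw [h1]; exact (hmemP u).mp hu
    have key1 : (1 + u a * αf a + u b * αf b) • h (Fin.castAdd n i) +
        ((u a * βf a) • h (Fin.natAdd ((Fintype.card F - 1) * n + 1) (ℓf a)) +
         (u b * βf b) • h (Fin.natAdd ((Fintype.card F - 1) * n + 1) (ℓf b))) = 0 := by
      rw [← hsum]
      rw [hdec a hai, hdec b hbi]
      module
    have hc1 : (1 + u a * αf a + u b * αf b) = 0 := by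
      have h2 := congrArg φ key1
      simp only [map_add, map_smul, hφnat, smul_eq_mul, mul_zero, add_zero, map_zero] at h2
      rcases mul_eq_zero.mp h2 with h4 | h5
      · exact h4
      · exact absurd h5 hφi
    have key2 : (u a * βf a) • h (Fin.natAdd ((Fintype.card F - 1) * n + 1) (ℓf a)) +
        (u b * βf b) • h (Fin.natAdd ((Fintype.card F - 1) * n + 1) (ℓf b)) = 0 := by
      rw [hc1, zero_smul, zero_add] at key1
      exact key1
    by_cases hLL : ℓf a = ℓf b
    · have coefβ : u a * βf a + u b * βf b = 0 := by
        rw [hLL, ← add_smul] at key2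
        rcases smul_eq_zero.mp key2 with h4 | h5
        · exact h4
        · exact absurd h5 (hnz _)
      funext k
      rw [hπapp]
      have h1 : ∑ j ∈ insert (Fin.castAdd n i) ({a, b} : Finset _), B k j * u j
          = ∑ j, B k j * u j :=
        Finset.sum_subset (Finset.subset_univ _) (fun x _ hx => by rw [hu0 x hx, mul_zero])
      rw [← h1, Finset.sum_insert hinotmem, Finset.sum_pair hab, hBi, zero_mul, zero_add]
      have hBa : B k a = if ℓf a = k then βf a else 0 := by rw [hBdef]; simp [hai]
      have hBb : B k b = if ℓf b = k then βf b else 0 := by rw [hBdef]; simp [hbi]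
      rw [hBa, hBb, ← hLL]
      by_cases hk : ℓf a = k
      · simp only [hk, if_pos]
        rw [Pi.zero_apply]
        calc βf a * u a + βf b * u b = u a * βf a + u b * βf b := by ring
        _ = 0 := coefβ
      · simp [hk]
    · exfalso
      have hne : Fin.natAdd ((Fintype.card F - 1) * n + 1) (ℓf a)
          ≠ Fin.natAdd ((Fintype.card F - 1) * n + 1) (ℓf b) :=
        fun he => hLL (hnatinj _ _ he)
      have := (hindep _ _ hne _ _ key2).1
      rcases mul_eq_zero.mp this with h4 | h5
      · exact hua h4
      · exact hβ a hai h5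
  -- π vanishes on the principal component
  have hRker : principalComponent h (Fin.castAdd n i) ≤ LinearMap.ker π := by
    apply Submodule.span_le.mpr
    rintro u ⟨hu1, hu2, hu3⟩
    exact LinearMap.mem_ker.mpr (hπgen u hu1 hu2 hu3)
  have hπR : ∀ r ∈ principalComponent h (Fin.castAdd n i), π r = 0 :=
    fun r hr => LinearMap.mem_ker.mp (hRker hr)
  have hRP : principalComponent h (Fin.castAdd n i) ≤ parityCheckCode h :=
    Submodule.span_le.mpr (fun u hu => hu.1)
  -- the weight-3 helper vectors
  set wv : Fin (((Fintype.card F - 1) * n + 1) + n) → Fin (((Fintype.card F - 1) * n + 1) + n) → F :=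
    fun j k0 => (if k0 = j then (1:F) else 0)
      - αf j * (if k0 = Fin.castAdd n i then 1 else 0)
      - βf j * (if k0 = Fin.natAdd ((Fintype.card F - 1) * n + 1) (ℓf j) then 1 else 0) with hwvdef
  have hwv_pcc : ∀ j, j ≠ Fin.castAdd n i → wv j ∈ parityCheckCode h := by
    intro j hj
    rw [hmemP]
    have he : ∀ k0, wv j k0 • h k0 = (if k0 = j then h k0 else 0)
        - αf j • (if k0 = Fin.castAdd n i then h k0 else 0)
        - βf j • (if k0 = Fin.natAdd ((Fintype.card F - 1) * n + 1) (ℓf j) then h k0 else 0) := by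
      intro k0
      rw [hwvdef]
      simp only [sub_smul, smul_smul]
      congr 1
      · congr 1
        · split <;> simp
        · split <;> simp
      · split <;> simp
    rw [Finset.sum_congr rfl (fun k0 _ => he k0)]
    rw [Finset.sum_sub_distrib, Finset.sum_sub_distrib, Finset.sum_ite_eq' Finset.univ j,
      ← Finset.smul_sum, ← Finset.smul_sum, Finset.sum_ite_eq' Finset.univ (Fin.castAdd n i),
      Finset.sum_ite_eq' Finset.univ (Fin.natAdd ((Fintype.card F - 1) * n + 1) (ℓf j))]
    simp only [Finset.mem_univ, if_pos]
    rw [hdec j hj]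
    abel
  have hαnz : ∀ j, j ≠ Fin.castAdd n i → φ (h j) ≠ 0 → αf j ≠ 0 := by
    intro j hj hφj hα0
    rw [hα j hj, hα0, zero_mul] at hφj
    exact hφj rfl
  have hjnat : ∀ j, φ (h j) ≠ 0 → j ≠ Fin.natAdd ((Fintype.card F - 1) * n + 1) (ℓf j) := by
    intro j hφj he
    exact hφj (he ▸ hφnat (ℓf j))
  have hwv_self : ∀ j, j ≠ Fin.castAdd n i → φ (h j) ≠ 0 → wv j j = 1 := by
    intro j hj hφj
    rw [hwvdef]
    simp [hj, hjnat j hφj]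
  have hwv_i : ∀ j, j ≠ Fin.castAdd n i → wv j (Fin.castAdd n i) = -αf j := by
    intro j hj
    rw [hwvdef]
    simp [Ne.symm hj, (hnatne (ℓf j)).symm]
  have hwv_nat : ∀ j, j ≠ Fin.castAdd n i → φ (h j) ≠ 0 →
      wv j (Fin.natAdd ((Fintype.card F - 1) * n + 1) (ℓf j)) = -βf j := by
    intro j hj hφj
    rw [hwvdef]
    simp [Ne.symm (hjnat j hφj), hnatne (ℓf j)]
  have hwv_other : ∀ j k0, k0 ≠ j → k0 ≠ Fin.castAdd n i →
      k0 ≠ Fin.natAdd ((Fintype.card F - 1) * n + 1) (ℓf j) → wv j k0 = 0 := by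
    intro j k0 h1 h2 h3
    rw [hwvdef]
    simp [h1, h2, h3]
  have hwvR : ∀ j, j ≠ Fin.castAdd n i → φ (h j) ≠ 0 →
      wv j ∈ principalComponent h (Fin.castAdd n i) := by
    intro j hj hφj
    have hαj := hαnz j hj hφj
    have hβj := hβ j hj
    have hnαj : (-αf j) ≠ 0 := neg_ne_zero.mpr hαj
    set g : Fin (((Fintype.card F - 1) * n + 1) + n) → F := (-αf j)⁻¹ • wv j with hgdef
    have hg_pcc : g ∈ parityCheckCode h := Submodule.smul_mem _ _ (hwv_pcc j hj)
    have hg_i : g (Fin.castAdd n i) = 1 := by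
      rw [hgdef]
      simp only [Pi.smul_apply, smul_eq_mul, hwv_i j hj]
      exact inv_mul_cancel₀ hnαj
    have hg_norm : hammingNorm g = 3 := by
      have hset : Finset.univ.filter (fun k0 => g k0 ≠ 0)
          = {j, Fin.castAdd n i, Fin.natAdd ((Fintype.card F - 1) * n + 1) (ℓf j)} := by
        ext k0
        simp only [Finset.mem_filter, Finset.mem_univ, true_and, Finset.mem_insert,
          Finset.mem_singleton]
        rw [hgdef]
        simp only [Pi.smul_apply, smul_eq_mul]
        constructor
        · intro hk0
          by_contra hcon
          push_neg at hcon
          rw [hwv_other j k0 hcon.1 hcon.2.1 hcon.2.2, mul_zero] at hk0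
          exact hk0 rfl
        · intro hk0
          rcases hk0 with h1 | h1 | h1 <;> rw [h1]
          · rw [hwv_self j hj hφj, mul_one]
            exact inv_ne_zero hnαj
          · rw [hwv_i j hj]
            exact mul_ne_zero (inv_ne_zero hnαj) hnαj
          · rw [hwv_nat j hj hφj]
            exact mul_ne_zero (inv_ne_zero hnαj) (neg_ne_zero.mpr hβj)
      show (Finset.filter (fun k0 => g k0 ≠ 0) Finset.univ).card = 3
      rw [hset]
      rw [Finset.card_insert_of_notMem (by simp [hj, hjnat j hφj]),
        Finset.card_insert_of_notMem (by simp [Ne.symm (hnatne (ℓf j))]),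
        Finset.card_singleton]
    have hgR : g ∈ principalComponent h (Fin.castAdd n i) :=
      Submodule.subset_span ⟨hg_pcc, hg_norm, hg_i⟩
    have hwg : wv j = (-αf j) • g := (smul_inv_smul₀ hnαj (wv j)).symm
    rw [hwg]
    exact Submodule.smul_mem _ _ hgR
  have hker : ∀ x, x ∈ parityCheckCode h → π x = 0 →
      x ∈ principalComponent h (Fin.castAdd n i) := by
    intro x hx hπx
    set s := Finset.univ.filter (fun j => j ≠ Fin.castAdd n i ∧ φ (h j) ≠ 0) with hsdef
    set w : Fin (((Fintype.card F - 1) * n + 1) + n) → F := ∑ j ∈ s, x j • wv j with hwdef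
    have hwR : w ∈ principalComponent h (Fin.castAdd n i) := by
      rw [hwdef]
      refine Submodule.sum_mem _ (fun j hj => ?_)
      have hj' := Finset.mem_filter.mp hj
      exact Submodule.smul_mem _ _ (hwvR j hj'.2.1 hj'.2.2)
    set y : Fin (((Fintype.card F - 1) * n + 1) + n) → F := x - w with hydef
    have hwapp : ∀ j0, w j0 = ∑ j ∈ s, x j * wv j j0 := by
      intro j0
      rw [hwdef]
      rw [Finset.sum_apply]
      simp [Pi.smul_apply, smul_eq_mul]
    have hy1 : ∀ j0, j0 ≠ Fin.castAdd n i → φ (h j0) ≠ 0 → y j0 = 0 := by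
      intro j0 hj0 hφj0
      rw [hydef]
      simp only [Pi.sub_apply]
      rw [hwapp]
      have he : ∀ j ∈ s, x j * wv j j0 = if j = j0 then x j else 0 := by
        intro j hj
        by_cases hjj : j = j0
        · subst hjj
          rw [hwv_self j (Finset.mem_filter.mp hj).2.1 (Finset.mem_filter.mp hj).2.2, mul_one,
            if_pos rfl]
        · rw [if_neg hjj]
          have hz : wv j j0 = 0 := by
            apply hwv_other j j0 (fun hc => hjj (hc.symm)) hj0
            intro hc
            exact hφj0 (hc ▸ hφnat (ℓf j))
          rw [hz, mul_zero]
      rw [Finset.sum_congr rfl he, Finset.sum_ite_eq' s j0]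
      rw [if_pos (Finset.mem_filter.mpr ⟨Finset.mem_univ _, hj0, hφj0⟩)]
      exact sub_self _
    have hy2 : π y = 0 := by
      rw [hydef, map_sub, hπx, hwdef, map_sum]
      have : ∀ j ∈ s, π (x j • wv j) = 0 := by
        intro j hj
        have hj' := Finset.mem_filter.mp hj
        rw [map_smul, hπR _ (hwvR j hj'.2.1 hj'.2.2), smul_zero]
      rw [Finset.sum_congr rfl this]
      simp
    have hy3 : ∀ k : Fin n, y (Fin.natAdd ((Fintype.card F - 1) * n + 1) k) = 0 := by
      intro k
      have h0 : π y k = 0 := by rw [hy2]; rfl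
      rw [hπapp, Fin.sum_univ_add] at h0
      have h1 : ∀ j : Fin ((Fintype.card F - 1) * n + 1),
          B k (Fin.castAdd n j) * y (Fin.castAdd n j) = 0 := by
        intro j
        by_cases hji : Fin.castAdd n j = Fin.castAdd n i
        · rw [hji, hBi, zero_mul]
        · have hφj : φ (h (Fin.castAdd n j)) ≠ 0 := by
            intro hc
            obtain ⟨k', hk'⟩ := (hhyp _).1 hc
            exact hcastnat j k' hk'
          rw [hy1 _ hji hφj, mul_zero]
      have h2 : ∀ j : Fin n,
          B k (Fin.natAdd ((Fintype.card F - 1) * n + 1) j)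
            * y (Fin.natAdd ((Fintype.card F - 1) * n + 1) j)
          = if j = k then y (Fin.natAdd ((Fintype.card F - 1) * n + 1) j) else 0 := by
        intro j
        rw [hBnat]
        split <;> ring
      rw [Finset.sum_congr rfl (fun j _ => h1 j), Finset.sum_congr rfl (fun j _ => h2 j)] at h0
      simp only [Finset.sum_const_zero, zero_add, Finset.sum_ite_eq' Finset.univ k,
        Finset.mem_univ, if_pos] at h0
      exact h0
    have hy_pcc : y ∈ parityCheckCode h := by
      rw [hydef]
      exact Submodule.sub_mem _ hx (hRP hwR)
    have hyall : ∀ j0, j0 ≠ Fin.castAdd n i → y j0 = 0 := by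
      intro j0 hj0
      by_cases hφj0 : φ (h j0) = 0
      · obtain ⟨k', hk'⟩ := (hhyp _).1 hφj0
        rw [hk']
        exact hy3 k'
      · exact hy1 j0 hj0 hφj0
    have hy4 : y (Fin.castAdd n i) = 0 := by
      have hsum : ∑ j, y j • h j = 0 := (hmemP y).mp hy_pcc
      rw [Finset.sum_eq_single (Fin.castAdd n i)
        (fun j _ hj => by rw [hyall j hj, zero_smul])
        (fun hc => absurd (Finset.mem_univ _) hc)] at hsum
      rcases smul_eq_zero.mp hsum with h1 | h2
      · exact h1
      · exact absurd h2 (hnz _)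
    have hy0 : y = 0 := by
      funext j0
      by_cases hj0 : j0 = Fin.castAdd n i
      · rw [hj0]; exact hy4
      · exact hyall j0 hj0
    have hxw : x = w := by
      have : x - w = 0 := hy0
      linear_combination (norm := abel) this
    rw [hxw]
    exact hwR
  -- the syndrome maps
  set T : (Fin (((Fintype.card F - 1) * n + 1) + n) → F) →ₗ[F] (Fin (m + 1) → F) :=
    Matrix.mulVecLin (Matrix.of (fun t j => h j t)) with hTdef
  have hT : ∀ x, T x = ∑ j, x j • h j := by
    intro x
    funext t
    rw [hTdef]
    simp only [Matrix.mulVecLin_apply, Matrix.mulVec, dotProduct, Matrix.of_apply]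
    rw [Finset.sum_apply]
    exact Finset.sum_congr rfl (fun j _ => by simp [mul_comm])
  set T' : (Fin n → F) →ₗ[F] (Fin (m + 1) → F) :=
    Matrix.mulVecLin (Matrix.of (fun t k => h (Fin.natAdd ((Fintype.card F - 1) * n + 1) k) t))
    with hT'def
  have hT' : ∀ v, T' v = ∑ k, v k • h (Fin.natAdd ((Fintype.card F - 1) * n + 1) k) := by
    intro v
    funext t
    rw [hT'def]
    simp only [Matrix.mulVecLin_apply, Matrix.mulVec, dotProduct, Matrix.of_apply]
    rw [Finset.sum_apply]
    exact Finset.sum_congr rfl (fun j _ => by simp [mul_comm])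
  have hTker : ∀ x, T x = 0 ↔ x ∈ parityCheckCode h := by
    intro x
    rw [hmemP, hT]
  have hTsurj : Function.Surjective T := by
    intro z
    by_cases hz : z = 0
    · exact ⟨0, by rw [map_zero, hz]⟩
    · obtain ⟨j, c, hc⟩ := hcover z hz
      refine ⟨fun j0 => if j0 = j then c else 0, ?_⟩
      rw [hT]
      have he : ∀ j0, (if j0 = j then c else 0) • h j0 = if j0 = j then c • h j0 else 0 := by
        intro j0; split <;> simp
      rw [Finset.sum_congr rfl (fun j0 _ => he j0), Finset.sum_ite_eq' Finset.univ j]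
      rw [if_pos (Finset.mem_univ _)]
      exact hc.symm
  have hφT' : ∀ v, φ (T' v) = 0 := by
    intro v
    rw [hT', map_sum]
    simp [map_smul, hφnat]
  have hT'range : ∀ z, (∃ v, T' v = z) ↔ φ z = 0 := by
    intro z
    constructor
    · rintro ⟨v, rfl⟩; exact hφT' v
    · intro hz
      by_cases hz0 : z = 0
      · exact ⟨0, by rw [map_zero, hz0]⟩
      · obtain ⟨j, c, hc⟩ := hcover z hz0
        have hc0 : c ≠ 0 := by rintro rfl; rw [zero_smul] at hc; exact hz0 hc
        have hφj : φ (h j) = 0 := by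
          have : c * φ (h j) = 0 := by rw [← smul_eq_mul, ← map_smul, ← hc]; exact hz
          rcases mul_eq_zero.mp this with h1 | h2
          · exact absurd h1 hc0
          · exact h2
        obtain ⟨k, hk⟩ := (hhyp _).1 hφj
        refine ⟨fun k0 => if k0 = k then c else 0, ?_⟩
        rw [hT']
        have he : ∀ k0, (if k0 = k then c else 0) • h (Fin.natAdd ((Fintype.card F - 1) * n + 1) k0)
            = if k0 = k then c • h (Fin.natAdd ((Fintype.card F - 1) * n + 1) k0) else 0 := by
          intro k0; split <;> simp
        rw [Finset.sum_congr rfl (fun k0 _ => he k0), Finset.sum_ite_eq' Finset.univ k]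
        rw [if_pos (Finset.mem_univ _), ← hk]
        exact hc.symm
  -- key identity
  have hTπ : ∀ x, T x = T' (π x)
      + (x (Fin.castAdd n i) + ∑ j ∈ Finset.univ.erase (Fin.castAdd n i), αf j * x j)
        • h (Fin.castAdd n i) := by
    intro x
    have step1 : T' (π x) = ∑ j, ∑ k,
        (B k j * x j) • h (Fin.natAdd ((Fintype.card F - 1) * n + 1) k) := by
      rw [hT']
      rw [Finset.sum_congr rfl (fun k _ => by
        rw [hπapp, Finset.sum_smul] :
          ∀ k ∈ Finset.univ, (π x k) • h (Fin.natAdd ((Fintype.card F - 1) * n + 1) k)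
            = ∑ j, (B k j * x j) • h (Fin.natAdd ((Fintype.card F - 1) * n + 1) k))]
      exact Finset.sum_comm
    have step2 : ∀ j, ∑ k, (B k j * x j) • h (Fin.natAdd ((Fintype.card F - 1) * n + 1) k)
        = if j = Fin.castAdd n i then 0
          else x j • h j - (αf j * x j) • h (Fin.castAdd n i) := by
      intro j
      by_cases hj : j = Fin.castAdd n i
      · rw [if_pos hj, hj]
        rw [Finset.sum_congr rfl (fun k _ => by rw [hBi, zero_mul, zero_smul] :
          ∀ k ∈ Finset.univ, (B k (Fin.castAdd n i) * x (Fin.castAdd n i))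
            • h (Fin.natAdd ((Fintype.card F - 1) * n + 1) k) = 0)]
        exact Finset.sum_const_zero
      · rw [if_neg hj]
        have he : ∀ k, (B k j * x j) • h (Fin.natAdd ((Fintype.card F - 1) * n + 1) k)
            = if ℓf j = k then (βf j * x j) • h (Fin.natAdd ((Fintype.card F - 1) * n + 1) k)
              else 0 := by
          intro k
          have hB : B k j = if ℓf j = k then βf j else 0 := by rw [hBdef]; simp [hj]
          rw [hB]
          split
          · rfl
          · rw [zero_mul, zero_smul]
        rw [Finset.sum_congr rfl (fun k _ => he k), Finset.sum_ite_eq Finset.univ (ℓf j)]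
        rw [if_pos (Finset.mem_univ _)]
        have hd : βf j • h (Fin.natAdd ((Fintype.card F - 1) * n + 1) (ℓf j))
            = h j - αf j • h (Fin.castAdd n i) := by
          rw [hdec j hj]; abel
        calc (βf j * x j) • h (Fin.natAdd ((Fintype.card F - 1) * n + 1) (ℓf j))
            = x j • (βf j • h (Fin.natAdd ((Fintype.card F - 1) * n + 1) (ℓf j))) := by
              rw [smul_smul, mul_comm]
          _ = x j • (h j - αf j • h (Fin.castAdd n i)) := by rw [hd]
          _ = x j • h j - (αf j * x j) • h (Fin.castAdd n i) := by
              rw [smul_sub, smul_smul, mul_comm]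
    have step3 : T' (π x) = ∑ j ∈ Finset.univ.erase (Fin.castAdd n i),
        (x j • h j - (αf j * x j) • h (Fin.castAdd n i)) := by
      rw [step1, Finset.sum_congr rfl (fun j _ => step2 j)]
      rw [← Finset.add_sum_erase _ _ (Finset.mem_univ (Fin.castAdd n i))]
      rw [if_pos rfl, zero_add]
      exact Finset.sum_congr rfl (fun j hj => by rw [if_neg (Finset.mem_erase.mp hj).1])
    have step4 : T x = x (Fin.castAdd n i) • h (Fin.castAdd n i)
        + ∑ j ∈ Finset.univ.erase (Fin.castAdd n i), x j • h j := by
      rw [hT, ← Finset.add_sum_erase _ _ (Finset.mem_univ (Fin.castAdd n i))]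
    rw [step3, step4, Finset.sum_sub_distrib, ← Finset.sum_smul, add_smul]
    abel
  have hT'π0 : ∀ x, x ∈ parityCheckCode h → T' (π x) = 0 := by
    intro x hx
    have h0 : T x = 0 := (hTker x).mpr hx
    rw [hTπ] at h0
    have h1 := congrArg φ h0
    simp only [map_add, map_smul, hφT', smul_eq_mul, zero_add, map_zero] at h1
    rcases mul_eq_zero.mp h1 with h2 | h3
    · rw [h2, zero_smul, add_zero] at h0
      exact h0
    · exact absurd h3 hφi
  -- cardinality computations
  have hcard_fun : ∀ N' : ℕ, Nat.card (Fin N' → F) = Fintype.card F ^ N' := by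
    intro N'
    rw [Nat.card_eq_fintype_card, Fintype.card_fun, Fintype.card_fin]
  have E1 : Fintype.card F ^ (((Fintype.card F - 1) * n + 1) + n)
      = Fintype.card F ^ (m + 1) * Nat.card (parityCheckCode h) := by
    have e := aux_card_eq_range_mul_ker T.toAddMonoidHom
    rw [hcard_fun] at e
    have hr : Nat.card T.toAddMonoidHom.range = Fintype.card F ^ (m + 1) := by
      rw [Nat.card_congr (Equiv.subtypeUnivEquiv
        (fun z => AddMonoidHom.mem_range.mpr (hTsurj z)))]
      exact hcard_fun (m + 1)
    have hk : Nat.card T.toAddMonoidHom.ker = Nat.card (parityCheckCode h) := by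
      exact Nat.card_congr (Equiv.subtypeEquivRight
        (fun x => by rw [AddMonoidHom.mem_ker]; exact hTker x))
    rw [hr, hk] at e
    exact e
  have E2 : Fintype.card F ^ n
      = Nat.card {z : Fin (m + 1) → F // φ z = 0} * Nat.card {v : Fin n → F // T' v = 0} := by
    have e := aux_card_eq_range_mul_ker T'.toAddMonoidHom
    rw [hcard_fun] at e
    have hr : Nat.card T'.toAddMonoidHom.range = Nat.card {z : Fin (m + 1) → F // φ z = 0} :=
      Nat.card_congr (Equiv.subtypeEquivRight
        (fun z => by rw [AddMonoidHom.mem_range]; exact hT'range z))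
    have hk : Nat.card T'.toAddMonoidHom.ker = Nat.card {v : Fin n → F // T' v = 0} :=
      Nat.card_congr (Equiv.subtypeEquivRight (fun v => by rw [AddMonoidHom.mem_ker]; rfl))
    rw [hr, hk] at e
    exact e
  have E3 : Fintype.card F ^ (m + 1)
      = Fintype.card F * Nat.card {z : Fin (m + 1) → F // φ z = 0} := by
    have e := aux_card_eq_range_mul_ker φ.toAddMonoidHom
    rw [hcard_fun] at e
    obtain ⟨z0, hz0⟩ : ∃ z0, φ z0 ≠ 0 := by
      by_contra hc
      push_neg at hc
      exact hφ (LinearMap.ext (fun z => by rw [hc z]; rfl))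
    have hφsurj : Function.Surjective φ := by
      intro s
      refine ⟨(s * (φ z0)⁻¹) • z0, ?_⟩
      rw [map_smul, smul_eq_mul, mul_assoc, inv_mul_cancel₀ hz0, mul_one]
    have hr : Nat.card φ.toAddMonoidHom.range = Fintype.card F := by
      rw [Nat.card_congr (Equiv.subtypeUnivEquiv
        (fun z => AddMonoidHom.mem_range.mpr (hφsurj z)))]
      exact Nat.card_eq_fintype_card
    have hk : Nat.card φ.toAddMonoidHom.ker = Nat.card {z : Fin (m + 1) → F // φ z = 0} :=
      Nat.card_congr (Equiv.subtypeEquivRight (fun z => by rw [AddMonoidHom.mem_ker]; rfl))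
    rw [hr, hk] at e
    exact e
  have E4 : Nat.card (parityCheckCode h)
      = Nat.card {v : Fin n → F // T' v = 0}
        * Nat.card (principalComponent h (Fin.castAdd n i)) := by
    have e := aux_card_eq_range_mul_ker
      ((π.domRestrict (parityCheckCode h)).toAddMonoidHom)
    have hr : Nat.card (π.domRestrict (parityCheckCode h)).toAddMonoidHom.range
        = Nat.card {v : Fin n → F // T' v = 0} := by
      refine Nat.card_congr (Equiv.subtypeEquivRight (fun z => ?_))
      rw [AddMonoidHom.mem_range]
      constructor
      · rintro ⟨x, rfl⟩
        exact hT'π0 _ x.2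
      · intro hz
        have hmem : Fin.append (0 : Fin ((Fintype.card F - 1) * n + 1) → F) z
            ∈ parityCheckCode h := by
          rw [hmemP, Fin.sum_univ_add]
          have h1 : ∀ j : Fin ((Fintype.card F - 1) * n + 1),
              Fin.append (0 : Fin ((Fintype.card F - 1) * n + 1) → F) z (Fin.castAdd n j)
                • h (Fin.castAdd n j) = 0 := by
            intro j; rw [Fin.append_left]; simp
          have h2 : ∑ j : Fin n,
              Fin.append (0 : Fin ((Fintype.card F - 1) * n + 1) → F) z
                (Fin.natAdd ((Fintype.card F - 1) * n + 1) j)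
                • h (Fin.natAdd ((Fintype.card F - 1) * n + 1) j) = T' z := by
            rw [hT']
            exact Finset.sum_congr rfl (fun j _ => by rw [Fin.append_right])
          rw [Finset.sum_congr rfl (fun j _ => h1 j), h2, hz]
          simp
        exact ⟨⟨_, hmem⟩, hπappend z⟩
    have hk : Nat.card (π.domRestrict (parityCheckCode h)).toAddMonoidHom.ker
        = Nat.card (principalComponent h (Fin.castAdd n i)) := by
      refine Nat.card_congr ?_
      refine ⟨fun u => ⟨(u.1 : _), hker _ u.1.2 u.2⟩,
        fun r => ⟨⟨r.1, hRP r.2⟩, hπR r.1 r.2⟩, ?_, ?_⟩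
      · intro u; rfl
      · intro r; rfl
    rw [hr, hk] at e
    exact e
    -- Lipschitz property of π
  have hBne : ∀ k j, B k j ≠ 0 → ℓf j = k := by
    intro k j hB
    rw [hBdef] at hB
    simp only at hB
    by_cases h1 : j = Fin.castAdd n i
    · rw [if_pos h1] at hB; exact absurd rfl hB
    · rw [if_neg h1] at hB
      by_cases h2 : ℓf j = k
      · exact h2
      · rw [if_neg h2] at hB; exact absurd rfl hB
  have hπlip : ∀ x y, hammingDist (π x) (π y) ≤ hammingDist x y := by
    intro x y
    have claim : ∀ k, π x k ≠ π y k → ∃ j, B k j ≠ 0 ∧ x j ≠ y j := by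
      intro k hk
      by_contra hcon
      push_neg at hcon
      apply hk
      rw [hπapp, hπapp]
      refine Finset.sum_congr rfl (fun j _ => ?_)
      by_cases hB : B k j = 0
      · rw [hB, zero_mul, zero_mul]
      · rw [hcon j hB]
    show (Finset.filter (fun k => π x k ≠ π y k) Finset.univ).card
      ≤ (Finset.filter (fun j => x j ≠ y j) Finset.univ).card
    refine Finset.card_le_card_of_injOn
      (fun k => if hk : π x k ≠ π y k then Classical.choose (claim k hk) else Fin.castAdd n i)
      ?_ ?_
    · intro k hk
      have hk' : π x k ≠ π y k := (Finset.mem_filter.mp hk).2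
      simp only [dif_pos hk']
      exact Finset.mem_filter.mpr ⟨Finset.mem_univ _, (Classical.choose_spec (claim k hk')).2⟩
    · intro k1 hk1 k2 hk2 he
      simp only [Finset.coe_filter, Set.mem_setOf_eq] at hk1 hk2
      simp only [dif_pos hk1.2, dif_pos hk2.2] at he
      have h1 := hBne k1 _ (Classical.choose_spec (claim k1 hk1.2)).1
      have h2 := hBne k2 _ (Classical.choose_spec (claim k2 hk2.2)).1
      rw [← h1, ← h2, he]
  -- permutation at coordinate i preserves distances and is injective
  have hdist_upd : ∀ (τ : Equiv.Perm F) x y,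
      hammingDist (applyAt (Fin.castAdd n i) τ x) (applyAt (Fin.castAdd n i) τ y)
        = hammingDist x y := by
    intro τ x y
    show (Finset.filter _ Finset.univ).card = (Finset.filter _ Finset.univ).card
    congr 1
    ext j
    simp only [Finset.mem_filter, Finset.mem_univ, true_and]
    unfold applyAt
    by_cases hj : j = Fin.castAdd n i
    · subst hj
      rw [Function.update_self, Function.update_self]
      exact not_congr (Equiv.apply_eq_iff_eq τ)
    · rw [Function.update_of_ne hj, Function.update_of_ne hj]
  have hupd_inj : ∀ (τ : Equiv.Perm F) x y,
      applyAt (Fin.castAdd n i) τ x = applyAt (Fin.castAdd n i) τ y → x = y := by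
    intro τ x y he
    funext j
    by_cases hj : j = Fin.castAdd n i
    · subst hj
      have h1 := congrFun he (Fin.castAdd n i)
      unfold applyAt at h1
      rw [Function.update_self, Function.update_self] at h1
      exact τ.injective h1
    · have h1 := congrFun he j
      unfold applyAt at h1
      rwa [Function.update_of_ne hj, Function.update_of_ne hj] at h1
  have hπpiece : ∀ (τ : Equiv.Perm F) (c : Fin n → F) r,
      r ∈ principalComponent h (Fin.castAdd n i) →
      π (applyAt (Fin.castAdd n i) τ
          (r + Fin.append (0 : Fin ((Fintype.card F - 1) * n + 1) → F) c)) = c := by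
    intro τ c r hr
    unfold applyAt
    rw [hπupd, map_add, hπR r hr, hπappend, zero_add]
  have hmemC : ∀ z, (z ∈ ⋃ c ∈ C1,
        applyAt (Fin.castAdd n i) (σ c) ''
          {w | ∃ r ∈ principalComponent h (Fin.castAdd n i),
                w = r + Fin.append (0 : Fin ((Fintype.card F - 1) * n + 1) → F) c})
      ↔ ∃ c, c ∈ C1 ∧ ∃ r, r ∈ principalComponent h (Fin.castAdd n i) ∧
          z = applyAt (Fin.castAdd n i) (σ c)
            (r + Fin.append (0 : Fin ((Fintype.card F - 1) * n + 1) → F) c) := by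
    intro z
    simp only [Set.mem_iUnion, Set.mem_image, Set.mem_setOf_eq]
    constructor
    · rintro ⟨c, hc, w, ⟨r, hr, rfl⟩, rfl⟩
      exact ⟨c, hc, r, hr, rfl⟩
    · rintro ⟨c, hc, r, hr, rfl⟩
      exact ⟨c, hc, _, ⟨r, hr, rfl⟩, rfl⟩
  obtain ⟨hC1d, hC1c⟩ := hC1
  have hacard : Nat.card C1 * Fintype.card F ^ m = Fintype.card F ^ n := by
    have h1 := hC1c
    simp only [Fintype.card_fin] at h1
    rw [hsmall] at h1
    exact h1
  constructor
  · -- minimum distance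
    intro x hx y hy hxy
    obtain ⟨c, hc, r, hr, rfl⟩ := (hmemC x).mp hx
    obtain ⟨c', hc', r', hr', rfl⟩ := (hmemC y).mp hy
    by_cases hcc : c = c'
    · subst hcc
      have hne : r + Fin.append (0 : Fin ((Fintype.card F - 1) * n + 1) → F) c
          ≠ r' + Fin.append (0 : Fin ((Fintype.card F - 1) * n + 1) → F) c := by
        intro hcon
        exact hxy (by rw [hcon])
      have hrr : (r + Fin.append (0 : Fin ((Fintype.card F - 1) * n + 1) → F) c)
          - (r' + Fin.append (0 : Fin ((Fintype.card F - 1) * n + 1) → F) c) ≠ 0 :=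
        sub_ne_zero.mpr hne
      rw [hdist_upd, hammingDist_comm, hammingDist_eq_hammingNorm, neg_add_eq_sub]
      have hsub : (r + Fin.append (0 : Fin ((Fintype.card F - 1) * n + 1) → F) c)
          - (r' + Fin.append (0 : Fin ((Fintype.card F - 1) * n + 1) → F) c) = r - r' := by
        abel
      refine hminw _ ?_ hrr
      rw [hsub]
      exact Submodule.sub_mem _ (hRP hr) (hRP hr')
    · calc (3 : ℕ) ≤ hammingDist c c' := hC1d c hc c' hc' hcc
        _ = hammingDist
            (π (applyAt (Fin.castAdd n i) (σ c)
              (r + Fin.append (0 : Fin ((Fintype.card F - 1) * n + 1) → F) c)))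
            (π (applyAt (Fin.castAdd n i) (σ c')
              (r' + Fin.append (0 : Fin ((Fintype.card F - 1) * n + 1) → F) c'))) := by
            rw [hπpiece _ _ _ hr, hπpiece _ _ _ hr']
        _ ≤ _ := hπlip _ _
  · -- cardinality
    simp only [Fintype.card_fin]
    rw [hbig]
    have hCcard : Nat.card (⋃ c ∈ C1,
        applyAt (Fin.castAdd n i) (σ c) ''
          {w | ∃ r ∈ principalComponent h (Fin.castAdd n i),
                w = r + Fin.append (0 : Fin ((Fintype.card F - 1) * n + 1) → F) c})
        = Nat.card C1 * Nat.card (principalComponent h (Fin.castAdd n i)) := by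
      rw [← Nat.card_prod]
      refine (Nat.card_congr (Equiv.ofBijective
        (fun p : C1 × (principalComponent h (Fin.castAdd n i)) =>
          (⟨applyAt (Fin.castAdd n i) (σ (p.1 : Fin n → F))
              ((p.2 : Fin (((Fintype.card F - 1) * n + 1) + n) → F)
                + Fin.append (0 : Fin ((Fintype.card F - 1) * n + 1) → F) (p.1 : Fin n → F)),
            (hmemC _).mpr ⟨p.1, p.1.2, p.2, p.2.2, rfl⟩⟩ :
            {z // z ∈ ⋃ c ∈ C1,
              applyAt (Fin.castAdd n i) (σ c) ''
                {w | ∃ r ∈ principalComponent h (Fin.castAdd n i),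
                  w = r + Fin.append (0 : Fin ((Fintype.card F - 1) * n + 1) → F) c}}))
        ⟨?_, ?_⟩)).symm
      · rintro ⟨⟨c, hc⟩, ⟨r, hr⟩⟩ ⟨⟨c', hc'⟩, ⟨r', hr'⟩⟩ he
        have hval := congrArg Subtype.val he
        simp only at hval
        have hceq : c = c' := by
          have h1 := congrArg π hval
          rw [hπpiece _ _ _ hr, hπpiece _ _ _ hr'] at h1
          exact h1
        subst hceq
        have h2 := hupd_inj _ _ _ hval
        have h3 : r = r' := by
          have := add_right_cancel h2
          exact this
        subst h3
        rfl
      · rintro ⟨z, hz⟩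
        obtain ⟨c, hc, r, hr, rfl⟩ := (hmemC z).mp hz
        exact ⟨(⟨c, hc⟩, ⟨r, hr⟩), rfl⟩
    rw [hCcard]
    have hqmpos : 0 < Fintype.card F ^ m := Nat.pow_pos (n := m) hq0
    have hK : Nat.card {z : Fin (m + 1) → F // φ z = 0} = Fintype.card F ^ m := by
      refine Nat.eq_of_mul_eq_mul_left hq0 ?_
      rw [← E3, pow_succ]
      ring
    have hch : Nat.card C1 = Nat.card {v : Fin n → F // T' v = 0} := by
      refine Nat.eq_of_mul_eq_mul_right hqmpos ?_
      rw [hacard, E2, hK]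
      ring
    calc Nat.card C1 * Nat.card (principalComponent h (Fin.castAdd n i))
          * Fintype.card F ^ (m + 1)
        = Fintype.card F ^ (m + 1) * (Nat.card {v : Fin n → F // T' v = 0}
            * Nat.card (principalComponent h (Fin.castAdd n i))) := by
          rw [hch]; ring
      _ = Fintype.card F ^ (m + 1) * Nat.card (parityCheckCode h) := by rw [← E4]
      _ = Fintype.card F ^ (((Fintype.card F - 1) * n + 1) + n) := E1.symm
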